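/- Let N ≥ 1, j = N/2, and for m ∈ {−j, …, j} let ω_m be the vector state ω_m(a) := ⟨m| a |m⟩ on M_(N+1)(ℂ). Then for any m < n in {−j, …, j}, the spectral distance is d_N(ω_m, ω_n) = Σ_{k=m+1}^{n} 1/√((j+k)(j−k+1)). -/

import Mathlib

noncomputable section
open Matrix

/-- The diagonal matrix `H` with `H|m⟩ = m|m⟩`, `m = i - N/2` for index `i : Fin (N+1)`. -/
def Hmat (N : ℕ) : Matrix (Fin (N + 1)) (Fin (N + 1)) ℂ :=
  Matrix.diagonal fun i => (i : ℂ) - (N : ℂ) / 2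

/-- The raising operator `E` with `E|m⟩ = √((j-m)(j+m+1)) |m+1⟩`, `j = N/2`. -/
def Emat (N : ℕ) : Matrix (Fin (N + 1)) (Fin (N + 1)) ℂ := fun p q =>
  if (p : ℕ) = (q : ℕ) + 1 then (Real.sqrt ((N - (q : ℕ)) * ((q : ℕ) + 1)) : ℂ) else 0

def Fmat (N : ℕ) : Matrix (Fin (N + 1)) (Fin (N + 1)) ℂ := (Emat N)ᴴ

/-- The Dirac operator `D_N = [[1+H, F], [E, 1-H]]` in block form on `ℂ^(N+1) ⊗ ℂ²`. -/
def DiracOp (N : ℕ) :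
    Matrix (Fin (N + 1) ⊕ Fin (N + 1)) (Fin (N + 1) ⊕ Fin (N + 1)) ℂ :=
  Matrix.fromBlocks (1 + Hmat N) (Fmat N) (Emat N) (1 - Hmat N)

/-- `a ⊗ 1₂` in block form. -/
def tensorOne (N : ℕ) (a : Matrix (Fin (N + 1)) (Fin (N + 1)) ℂ) :
    Matrix (Fin (N + 1) ⊕ Fin (N + 1)) (Fin (N + 1) ⊕ Fin (N + 1)) ℂ :=
  Matrix.fromBlocks a 0 0 a

/-- The operator norm of a square complex matrix, acting on Euclidean space. -/
def opNorm {n : Type*} [Fintype n] [DecidableEq n] (M : Matrix n n ℂ) : ℝ :=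
  ‖Matrix.toEuclideanCLM (𝕜 := ℂ) M‖

/-- The spectral distance between two states (functionals) on `M_(N+1)(ℂ)`:
`d_N(ω, ω') = sup { |ω(a) − ω'(a)| : a = a*, ‖[D_N, a ⊗ 1₂]‖ ≤ 1 }`. -/
def specDist (N : ℕ) (ω ω' : Matrix (Fin (N + 1)) (Fin (N + 1)) ℂ → ℂ) : ℝ :=
  sSup {r : ℝ | ∃ a : Matrix (Fin (N + 1)) (Fin (N + 1)) ℂ, a.IsHermitian ∧
    opNorm (DiracOp N * tensorOne N a - tensorOne N a * DiracOp N) ≤ 1 ∧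
    r = ‖ω a - ω' a‖}

open scoped Matrix.Norms.L2Operator

lemma opNorm_eq_norm {n : Type*} [Fintype n] [DecidableEq n] (M : Matrix n n ℂ) :
    opNorm M = ‖M‖ := rfl

lemma euclid_coord_le {n : Type*} [Fintype n] (v : EuclideanSpace ℂ n) (i : n) :
    ‖v i‖ ≤ ‖v‖ := by
  rw [EuclideanSpace.norm_eq]
  calc ‖v i‖ = Real.sqrt (‖v i‖ ^ 2) := by rw [Real.sqrt_sq (norm_nonneg _)]
    _ ≤ _ := Real.sqrt_le_sqrt (Finset.single_le_sum (f := fun j => ‖v j‖ ^ 2)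
        (fun j _ => sq_nonneg _) (Finset.mem_univ i))

lemma entry_le_opNorm {n : Type*} [Fintype n] [DecidableEq n] (M : Matrix n n ℂ) (i j : n) :
    ‖M i j‖ ≤ opNorm M := by
  have h3 : (Matrix.toEuclideanCLM (𝕜 := ℂ) M (EuclideanSpace.single j 1)) i = M i j := by
    show (M *ᵥ ⇑(EuclideanSpace.single j (1:ℂ))) i = M i j
    simp [Matrix.mulVec, dotProduct, EuclideanSpace.single_apply, mul_ite]
  have h1 := euclid_coord_le (Matrix.toEuclideanCLM (𝕜 := ℂ) M (EuclideanSpace.single j 1)) i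
  have h2 : ‖Matrix.toEuclideanCLM (𝕜 := ℂ) M (EuclideanSpace.single j 1)‖ ≤ opNorm M := by
    calc ‖Matrix.toEuclideanCLM (𝕜 := ℂ) M (EuclideanSpace.single j 1)‖
        ≤ opNorm M * ‖EuclideanSpace.single j (1:ℂ)‖ :=
          (Matrix.toEuclideanCLM (𝕜 := ℂ) M).le_opNorm _
      _ = opNorm M := by rw [EuclideanSpace.norm_single, norm_one, mul_one]
  rw [← h3]
  exact h1.trans h2

lemma opNorm_diagonal_le {n : Type*} [Fintype n] [DecidableEq n] (d : n → ℂ)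
    (hd : ∀ i, ‖d i‖ ≤ 1) : opNorm (Matrix.diagonal d) ≤ 1 := by
  apply ContinuousLinearMap.opNorm_le_bound _ zero_le_one
  intro x
  rw [one_mul]
  have hx : ∀ i, (Matrix.toEuclideanCLM (𝕜 := ℂ) (Matrix.diagonal d) x) i = d i * x i :=
    fun i => by
      show (Matrix.diagonal d *ᵥ ⇑x) i = _
      rw [Matrix.mulVec_diagonal]
  rw [EuclideanSpace.norm_eq, EuclideanSpace.norm_eq]
  apply Real.sqrt_le_sqrt
  apply Finset.sum_le_sum
  intro i _
  rw [hx i, norm_mul, mul_pow]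
  apply mul_le_of_le_one_left (sq_nonneg _)
  have := hd i
  have h0 := norm_nonneg (d i)
  nlinarith

lemma opNorm_le_one_of_conjTranspose_mul_self {n : Type*} [Fintype n] [DecidableEq n]
    (K : Matrix n n ℂ) (h : opNorm (Kᴴ * K) ≤ 1) : opNorm K ≤ 1 := by
  have h2 : opNorm K * opNorm K ≤ 1 := by
    rw [opNorm_eq_norm, ← Matrix.l2_opNorm_conjTranspose_mul_self]
    exact h
  nlinarith [norm_nonneg (Matrix.toEuclideanCLM (𝕜 := ℂ) K), le_of_eq (opNorm_eq_norm K)]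

lemma telescope (f : ℕ → ℂ) (g : ℕ → ℝ) (p q : ℕ) (hpq : p ≤ q)
    (h : ∀ k, p ≤ k → k < q → ‖f k - f (k + 1)‖ ≤ g (k + 1)) :
    ‖f p - f q‖ ≤ ∑ k ∈ Finset.Icc (p + 1) q, g k := by
  induction q, hpq using Nat.le_induction with
  | base => simp
  | succ n hn ih =>
    have h1 := ih (fun k hk hk2 => h k hk (by omega))
    have h2 := h n hn (by omega)
    calc ‖f p - f (n + 1)‖
        ≤ ‖f p - f n‖ + ‖f n - f (n + 1)‖ :=
          norm_sub_le_norm_sub_add_norm_sub _ _ _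
      _ ≤ (∑ k ∈ Finset.Icc (p + 1) n, g k) + g (n + 1) := add_le_add h1 h2
      _ = ∑ k ∈ Finset.Icc (p + 1) (n + 1), g k :=
          (Finset.sum_Icc_succ_top (by omega) g).symm

lemma comm_eq_fromBlocks (N : ℕ) (a : Matrix (Fin (N + 1)) (Fin (N + 1)) ℂ) :
    DiracOp N * tensorOne N a - tensorOne N a * DiracOp N =
      Matrix.fromBlocks ((1 + Hmat N) * a - a * (1 + Hmat N)) (Fmat N * a - a * Fmat N)
        (Emat N * a - a * Emat N) ((1 - Hmat N) * a - a * (1 - Hmat N)) := by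
  unfold DiracOp tensorOne
  rw [Matrix.fromBlocks_multiply, Matrix.fromBlocks_multiply]
  ext i j
  rcases i with r | r <;> rcases j with s | s <;>
    simp [Matrix.fromBlocks, Matrix.sub_apply]

lemma Ea_sub_aE_entry (N : ℕ) (a : Matrix (Fin (N + 1)) (Fin (N + 1)) ℂ) (k : ℕ) (hk : k < N) :
    (Emat N * a - a * Emat N) ⟨k + 1, by omega⟩ ⟨k, by omega⟩ =
      (Real.sqrt ((N - k) * (k + 1)) : ℂ) *
        (a ⟨k, by omega⟩ ⟨k, by omega⟩ - a ⟨k + 1, by omega⟩ ⟨k + 1, by omega⟩) := by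
  have h1 : (Emat N * a) ⟨k + 1, by omega⟩ ⟨k, by omega⟩ =
      (Real.sqrt ((N - k) * (k + 1)) : ℂ) * a ⟨k, by omega⟩ ⟨k, by omega⟩ := by
    rw [Matrix.mul_apply, Finset.sum_eq_single (⟨k, by omega⟩ : Fin (N + 1))]
    · simp [Emat]
    · intro t _ ht
      have hne : (t : ℕ) ≠ k := fun h => ht (Fin.ext (by simp [h]))
      simp only [Emat, Fin.val_mk]
      rw [if_neg (by omega), zero_mul]
    · simp
  have h2 : (a * Emat N) ⟨k + 1, by omega⟩ ⟨k, by omega⟩ =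
      a ⟨k + 1, by omega⟩ ⟨k + 1, by omega⟩ * (Real.sqrt ((N - k) * (k + 1)) : ℂ) := by
    rw [Matrix.mul_apply, Finset.sum_eq_single (⟨k + 1, by omega⟩ : Fin (N + 1))]
    · simp [Emat]
    · intro t _ ht
      have hne : (t : ℕ) ≠ k + 1 := fun h => ht (Fin.ext (by simp [h]))
      simp only [Emat, Fin.val_mk]
      rw [if_neg (by omega), mul_zero]
    · simp
  rw [Matrix.sub_apply, h1, h2]
  ring

lemma step_bound (N : ℕ) (a : Matrix (Fin (N + 1)) (Fin (N + 1)) ℂ)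
    (hC : opNorm (DiracOp N * tensorOne N a - tensorOne N a * DiracOp N) ≤ 1)
    (k : ℕ) (hk : k < N) :
    ‖a ⟨k, by omega⟩ ⟨k, by omega⟩ - a ⟨k + 1, by omega⟩ ⟨k + 1, by omega⟩‖ ≤
      1 / Real.sqrt ((N - k) * (k + 1)) := by
  have he := (entry_le_opNorm (DiracOp N * tensorOne N a - tensorOne N a * DiracOp N)
    (Sum.inr ⟨k + 1, by omega⟩) (Sum.inl ⟨k, by omega⟩)).trans hC
  rw [comm_eq_fromBlocks, Matrix.fromBlocks_apply₂₁, Ea_sub_aE_entry N a k hk] at he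
  rw [norm_mul, Complex.norm_real, Real.norm_eq_abs, abs_of_nonneg (Real.sqrt_nonneg _)] at he
  have hpos : 0 < Real.sqrt ((N - k) * (k + 1)) := by
    apply Real.sqrt_pos.2
    have h1 : (k : ℝ) < (N : ℝ) := by exact_mod_cast hk
    nlinarith
  rw [le_div_iff₀ hpos]
  linarith [he, mul_comm (Real.sqrt ((N - k) * (k + 1)))
    (‖a ⟨k, by omega⟩ ⟨k, by omega⟩ - a ⟨k + 1, by omega⟩ ⟨k + 1, by omega⟩‖)]

/-- weight -/
def gval (N k : ℕ) : ℝ := 1 / Real.sqrt ((k : ℝ) * ((N : ℝ) + 1 - (k : ℝ)))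

lemma gval_nonneg (N k : ℕ) : 0 ≤ gval N k := by
  unfold gval; positivity

/-- partial sums -/
def sigma (N t : ℕ) : ℝ := ∑ k ∈ Finset.Icc 1 t, gval N k

lemma sigma_succ (N t : ℕ) : sigma N (t + 1) = sigma N t + gval N (t + 1) := by
  unfold sigma
  exact Finset.sum_Icc_succ_top (by omega) _

lemma sqrt_mul_gval (N s : ℕ) (hs : s < N) :
    Real.sqrt (((N : ℝ) - (s : ℕ)) * ((s : ℕ) + 1)) * gval N (s + 1) = 1 := by
  have harg : ((s + 1 : ℕ) : ℝ) * ((N : ℝ) + 1 - ((s + 1 : ℕ) : ℝ)) =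
      ((N : ℝ) - (s : ℕ)) * ((s : ℕ) + 1) := by push_cast; ring
  have hpos : (0 : ℝ) < ((N : ℝ) - (s : ℕ)) * ((s : ℕ) + 1) := by
    have h1 : (s : ℝ) < (N : ℝ) := by exact_mod_cast hs
    nlinarith
  rw [gval, harg, mul_one_div, div_self (Real.sqrt_ne_zero'.2 hpos)]

def bmat (N : ℕ) : Matrix (Fin (N + 1)) (Fin (N + 1)) ℂ :=
  Matrix.diagonal fun i => ((sigma N (i : ℕ) : ℝ) : ℂ)

lemma bmat_herm (N : ℕ) : (bmat N).IsHermitian := by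
  apply Matrix.isHermitian_diagonal_of_self_adjoint
  funext i
  simp [Pi.star_apply, Complex.star_def, Complex.conj_ofReal]

def Smat (N : ℕ) : Matrix (Fin (N + 1)) (Fin (N + 1)) ℂ := fun r s =>
  if (r : ℕ) = (s : ℕ) + 1 then (-1 : ℂ) else 0

def Tmat (N : ℕ) : Matrix (Fin (N + 1)) (Fin (N + 1)) ℂ := fun r s =>
  if (s : ℕ) = (r : ℕ) + 1 then (1 : ℂ) else 0

lemma Eb_sub_bE (N : ℕ) : Emat N * bmat N - bmat N * Emat N = Smat N := by
  ext r s
  rw [Matrix.sub_apply, bmat, Matrix.mul_diagonal, Matrix.diagonal_mul]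
  by_cases h : (r : ℕ) = (s : ℕ) + 1
  · have hsN : (s : ℕ) < N := by have := r.isLt; omega
    have hre : Real.sqrt (((N : ℝ) - (s : ℕ)) * ((s : ℕ) + 1)) *
        (sigma N (s : ℕ) - sigma N ((s : ℕ) + 1)) = -1 := by
      rw [sigma_succ]
      linear_combination -sqrt_mul_gval N s hsN
    have h2 := congrArg (fun x : ℝ => (x : ℂ)) hre
    push_cast at h2
    simp only [Emat, Smat, if_pos h, h, if_true]
    linear_combination h2
  · simp only [Emat, Smat, if_neg h]
    ring

lemma Fb_sub_bF (N : ℕ) : Fmat N * bmat N - bmat N * Fmat N = Tmat N := by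
  ext r s
  rw [Matrix.sub_apply, bmat, Matrix.mul_diagonal, Matrix.diagonal_mul]
  have hF : Fmat N r s = if (s : ℕ) = (r : ℕ) + 1
      then ((Real.sqrt (((N : ℝ) - (r : ℕ)) * ((r : ℕ) + 1)) : ℝ) : ℂ) else 0 := by
    simp only [Fmat, Matrix.conjTranspose_apply, Emat]
    split_ifs
    · rw [Complex.star_def, Complex.conj_ofReal]
    · exact star_zero _
  by_cases h : (s : ℕ) = (r : ℕ) + 1
  · have hrN : (r : ℕ) < N := by have := s.isLt; omega
    have hre : Real.sqrt (((N : ℝ) - (r : ℕ)) * ((r : ℕ) + 1)) *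
        (sigma N ((r : ℕ) + 1) - sigma N (r : ℕ)) = 1 := by
      rw [sigma_succ]
      linear_combination sqrt_mul_gval N r hrN
    have h2 := congrArg (fun x : ℝ => (x : ℂ)) hre
    push_cast at h2
    rw [hF]
    simp only [Tmat, if_pos h, h, if_true]
    linear_combination h2
  · rw [hF]
    simp only [Tmat, if_neg h]
    ring

lemma Hb_comm (N : ℕ) : Hmat N * bmat N = bmat N * Hmat N := by
  unfold Hmat bmat
  rw [Matrix.diagonal_mul_diagonal, Matrix.diagonal_mul_diagonal]
  ext i j
  by_cases hij : i = j
  · subst hij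
    rw [Matrix.diagonal_apply_eq, Matrix.diagonal_apply_eq]
    ring
  · rw [Matrix.diagonal_apply_ne _ hij, Matrix.diagonal_apply_ne _ hij]

lemma comm_bmat (N : ℕ) :
    DiracOp N * tensorOne N (bmat N) - tensorOne N (bmat N) * DiracOp N =
      Matrix.fromBlocks 0 (Tmat N) (Smat N) 0 := by
  rw [comm_eq_fromBlocks]
  have h1 : (1 + Hmat N) * bmat N - bmat N * (1 + Hmat N) = 0 := by
    rw [add_mul, mul_add, one_mul, mul_one, Hb_comm]
    abel
  have h2 : (1 - Hmat N) * bmat N - bmat N * (1 - Hmat N) = 0 := by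
    rw [sub_mul, mul_sub, one_mul, mul_one, Hb_comm]
    abel
  rw [h1, h2, Eb_sub_bE, Fb_sub_bF]

lemma StS (N : ℕ) : (Smat N)ᴴ * Smat N =
    Matrix.diagonal (fun r : Fin (N + 1) => if (r : ℕ) < N then (1 : ℂ) else 0) := by
  ext r s
  rw [Matrix.mul_apply, Matrix.diagonal_apply]
  by_cases hr : (r : ℕ) < N
  · rw [Finset.sum_eq_single (⟨(r : ℕ) + 1, by omega⟩ : Fin (N + 1))]
    · simp only [Matrix.conjTranspose_apply, Smat, Fin.val_mk, if_pos rfl]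
      by_cases hrs : r = s
      · subst hrs
        rw [if_pos rfl, if_pos rfl, if_pos hr]
        simp
      · rw [if_neg (fun hh : (r : ℕ) + 1 = (s : ℕ) + 1 => hrs (Fin.ext (by omega))),
          if_neg hrs, mul_zero]
    · intro t _ ht
      have hne : (t : ℕ) ≠ (r : ℕ) + 1 := fun hh => ht (Fin.ext (by simp [hh]))
      simp only [Matrix.conjTranspose_apply, Smat]
      rw [if_neg hne, star_zero, zero_mul]
    · simp
  · rw [Finset.sum_eq_zero, eq_comm]
    · split_ifs with h1 h2
      · rfl
      · rfl
    · intro t _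
      have ht := t.isLt
      simp only [Matrix.conjTranspose_apply, Smat]
      rw [if_neg (by omega), star_zero, zero_mul]

lemma TtT (N : ℕ) : (Tmat N)ᴴ * Tmat N =
    Matrix.diagonal (fun r : Fin (N + 1) => if 1 ≤ (r : ℕ) then (1 : ℂ) else 0) := by
  ext r s
  rw [Matrix.mul_apply, Matrix.diagonal_apply]
  by_cases hr : 1 ≤ (r : ℕ)
  · rw [Finset.sum_eq_single (⟨(r : ℕ) - 1, by omega⟩ : Fin (N + 1))]
    · simp only [Matrix.conjTranspose_apply, Tmat, Fin.val_mk]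
      rw [if_pos (by omega)]
      by_cases hrs : r = s
      · subst hrs
        rw [if_pos (by omega), if_pos rfl, if_pos hr]
        simp
      · rw [if_neg (fun hh : (s : ℕ) = (r : ℕ) - 1 + 1 => hrs (Fin.ext (by omega))),
          if_neg hrs, mul_zero]
    · intro t _ ht
      have hne : (r : ℕ) ≠ (t : ℕ) + 1 := fun hh => ht (Fin.ext (by simp only [Fin.val_mk]; omega))
      simp only [Matrix.conjTranspose_apply, Tmat]
      rw [if_neg hne, star_zero, zero_mul]
    · simp
  · rw [Finset.sum_eq_zero, eq_comm]
    · split_ifs with h1 h2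
      · rfl
      · rfl
    · intro t _
      simp only [Matrix.conjTranspose_apply, Tmat]
      rw [if_neg (by omega), star_zero, zero_mul]

lemma opNorm_K_le (N : ℕ) : opNorm (Matrix.fromBlocks 0 (Tmat N) (Smat N) 0) ≤ 1 := by
  apply opNorm_le_one_of_conjTranspose_mul_self
  have hct : (Matrix.fromBlocks 0 (Tmat N) (Smat N) 0)ᴴ =
      Matrix.fromBlocks 0 (Smat N)ᴴ (Tmat N)ᴴ 0 := by
    rw [Matrix.fromBlocks_conjTranspose]
    congr 1 <;> simp
  rw [hct, Matrix.fromBlocks_multiply]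
  have h11 : (0 : Matrix (Fin (N+1)) (Fin (N+1)) ℂ) * 0 + (Smat N)ᴴ * Smat N =
      (Smat N)ᴴ * Smat N := by simp
  have hK : (Matrix.fromBlocks ((0:Matrix (Fin (N+1)) (Fin (N+1)) ℂ) * 0 + (Smat N)ᴴ * Smat N)
      (0 * Tmat N + (Smat N)ᴴ * 0) ((Tmat N)ᴴ * 0 + 0 * Smat N) ((Tmat N)ᴴ * Tmat N + 0 * 0)) =
      Matrix.fromBlocks ((Smat N)ᴴ * Smat N) 0 0 ((Tmat N)ᴴ * Tmat N) := by
    simp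
  rw [hK, StS, TtT, Matrix.fromBlocks_diagonal]
  apply opNorm_diagonal_le
  intro i
  rcases i with r | r <;> simp only [Sum.elim_inl, Sum.elim_inr] <;> split_ifs <;> simp

lemma sigma_diff (N p q : ℕ) (h : p ≤ q) :
    sigma N q = sigma N p + ∑ k ∈ Finset.Icc (p + 1) q, gval N k := by
  induction q, h using Nat.le_induction with
  | base => simp [Finset.Icc_eq_empty_of_lt (Nat.lt_succ_self p)]
  | succ n hn ih =>
    rw [sigma_succ, ih, Finset.sum_Icc_succ_top (by omega), add_assoc]


theorem specDist_basis (N : ℕ) (hN : 1 ≤ N) (p q : Fin (N + 1)) (hpq : p < q) :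
    specDist N (fun a => a p p) (fun a => a q q) =
      ∑ k ∈ Finset.Icc ((p : ℕ) + 1) (q : ℕ), 1 / Real.sqrt (k * (N + 1 - k)) := by
  have hpq' : (p : ℕ) < (q : ℕ) := hpq
  have hqN : (q : ℕ) ≤ N := by have := q.isLt; omega
  have hsum : (∑ k ∈ Finset.Icc ((p : ℕ) + 1) (q : ℕ), 1 / Real.sqrt (k * (N + 1 - k))) =
      ∑ k ∈ Finset.Icc ((p : ℕ) + 1) (q : ℕ), gval N k := rfl
  rw [hsum]
  set SS := ∑ k ∈ Finset.Icc ((p : ℕ) + 1) (q : ℕ), gval N k with hSS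
  -- the value attained by the witness matrix
  have hval : ‖(bmat N) p p - (bmat N) q q‖ = SS := by
    unfold bmat
    rw [Matrix.diagonal_apply_eq, Matrix.diagonal_apply_eq, ← Complex.ofReal_sub,
      Complex.norm_real, Real.norm_eq_abs, abs_sub_comm, sigma_diff N p q (le_of_lt hpq'),
      add_sub_cancel_left]
    exact abs_of_nonneg (Finset.sum_nonneg fun k _ => gval_nonneg N k)
  have hmem : SS ∈ {r : ℝ | ∃ a : Matrix (Fin (N + 1)) (Fin (N + 1)) ℂ, a.IsHermitian ∧
      opNorm (DiracOp N * tensorOne N a - tensorOne N a * DiracOp N) ≤ 1 ∧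
      r = ‖(fun a => a p p) a - (fun a => a q q) a‖} :=
    ⟨bmat N, bmat_herm N, by rw [comm_bmat]; exact opNorm_K_le N, hval.symm⟩
  have hub : ∀ r ∈ {r : ℝ | ∃ a : Matrix (Fin (N + 1)) (Fin (N + 1)) ℂ, a.IsHermitian ∧
      opNorm (DiracOp N * tensorOne N a - tensorOne N a * DiracOp N) ≤ 1 ∧
      r = ‖(fun a => a p p) a - (fun a => a q q) a‖}, r ≤ SS := by
    rintro r ⟨a, -, hC, rfl⟩
    show ‖a p p - a q q‖ ≤ SS
    set f : ℕ → ℂ := fun k => a ⟨min k N, Nat.lt_succ_of_le (Nat.min_le_right k N)⟩ ⟨min k N, Nat.lt_succ_of_le (Nat.min_le_right k N)⟩ with hf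
    have hfin : ∀ k (hk : k ≤ N), (⟨min k N, by omega⟩ : Fin (N + 1)) = ⟨k, by omega⟩ :=
      fun k hk => Fin.ext (by simp only [Fin.val_mk]; omega)
    have hstep : ∀ k, (p : ℕ) ≤ k → k < (q : ℕ) →
        ‖f k - f (k + 1)‖ ≤ gval N (k + 1) := by
      intro k hk1 hk2
      have hkN : k < N := by omega
      have hgv : gval N (k + 1) = 1 / Real.sqrt (((N : ℝ) - k) * (k + 1)) := by
        unfold gval
        rw [show ((k + 1 : ℕ) : ℝ) * ((N : ℝ) + 1 - ((k + 1 : ℕ) : ℝ)) =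
          ((N : ℝ) - k) * (k + 1) by push_cast; ring]
      rw [hgv, hf]
      simp only [hfin k (by omega), hfin (k + 1) (by omega)]
      exact step_bound N a hC k hkN
    have htel := telescope f (gval N) p q (le_of_lt hpq') hstep
    rw [hf] at htel
    simp only [hfin (p : ℕ) (by omega), hfin (q : ℕ) hqN] at htel
    have hfp : (⟨(p : ℕ), by omega⟩ : Fin (N + 1)) = p := Fin.ext rfl
    have hfq : (⟨(q : ℕ), by omega⟩ : Fin (N + 1)) = q := Fin.ext rfl
    rw [hfp, hfq] at htel
    exact htel
  rw [specDist]
  exact le_antisymm (csSup_le ⟨SS, hmem⟩ hub) (le_csSup ⟨SS, fun r hr => hub r hr⟩ hmem)
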